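/- Every cycle of even length admits a locally irregular edge coloring with at most 3 colors. -/

import Mathlib

/-- The number of edges of color `c` incident to vertex `v` under edge coloring `φ`
(the `c`-degree of `v`). -/
noncomputable def colorDeg {V α : Type*} (G : SimpleGraph V)
    (φ : Sym2 V → α) (c : α) (v : V) : ℕ :=
  Nat.card {w : V // G.Adj v w ∧ φ s(v, w) = c}

/-- An edge coloring of `G` is locally irregular if within every color class the
endpoints of each edge have distinct degrees (isolated vertices are irrelevant). -/
def IsLocIrrColoring {V α : Type*} (G : SimpleGraph V) (φ : Sym2 V → α) : Prop :=
  ∀ ⦃v w : V⦄, G.Adj v w →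
    colorDeg G φ (φ s(v, w)) v ≠ colorDeg G φ (φ s(v, w)) w

def col (n : ℕ) (u : Fin n) : Fin 3 :=
  if (n / 2) % 2 = 1 ∧ n - 2 ≤ u.val then 2
  else if (u.val / 2) % 2 = 0 then 0 else 1

lemma col_succ {m : ℕ} (hm : m % 2 = 0) (h4 : 2 ≤ m) (u : Fin (m + 2)) :
    col (m + 2) (u + 1) = col (m + 2) u ↔ u.val % 2 = 0 := by
  have hk : u.val < m + 2 := u.isLt
  rcases Nat.lt_or_ge (u.val + 1) (m + 2) with hlt | hge
  · have h1v : ((u + 1 : Fin (m + 2))).val = u.val + 1 := by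
      rw [Fin.add_def, Fin.val_one]; exact Nat.mod_eq_of_lt hlt
    simp only [col, h1v, Nat.add_sub_cancel]
    split_ifs <;>
      first
        | (apply iff_of_true (by decide) (by omega))
        | (apply iff_of_false (by decide) (by omega))
        | (exfalso; omega)
  · have hlast : u.val = m + 1 := by omega
    have h1v : ((u + 1 : Fin (m + 2))).val = 0 := by
      rw [Fin.add_def, Fin.val_one]; simp [hlast]
    simp only [col, h1v, Nat.add_sub_cancel, hlast]
    split_ifs <;>
      first
        | (apply iff_of_true (by decide) (by omega))
        | (apply iff_of_false (by decide) (by omega))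
        | (exfalso; omega)

lemma pred_parity {m : ℕ} (hm : m % 2 = 0) (u : Fin (m + 2)) :
    (u - 1).val % 2 = 0 ↔ ¬ u.val % 2 = 0 := by
  have hk : u.val < m + 2 := u.isLt
  have hsub : (u - 1).val = (m + 1 + u.val) % (m + 2) := by
    rw [Fin.sub_def, Fin.val_one]; simp
  rcases Nat.eq_zero_or_pos u.val with h0 | hpos
  · rw [hsub, h0, Nat.mod_eq_of_lt (show m + 1 + 0 < m + 2 by omega)]; omega
  · rw [hsub]
    have : (m + 1 + u.val) % (m + 2) = u.val - 1 := by
      rw [show m + 1 + u.val = (u.val - 1) + 1 * (m + 2) by omega]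
      rw [Nat.add_mul_mod_self_right, Nat.mod_eq_of_lt (by omega)]
    rw [this]; omega

def myf (m : ℕ) (u w : Fin (m + 2)) : Fin 3 :=
  if w = u + 1 ∧ u ≠ w + 1 then col (m + 2) u
  else if u = w + 1 ∧ w ≠ u + 1 then col (m + 2) w
  else 0

lemma myf_symm (m : ℕ) (u w : Fin (m + 2)) : myf m u w = myf m w u := by
  unfold myf
  split_ifs <;> tauto

def myphi (m : ℕ) : Sym2 (Fin (m + 2)) → Fin 3 :=
  Sym2.lift ⟨fun u w => myf m u w, fun u w => myf_symm m u w⟩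

lemma no_two_cycle {m : ℕ} (h1 : 1 ≤ m) (u : Fin (m + 2)) : u ≠ (u + 1) + 1 := by
  intro h
  have h' : u + (1 + 1) = u + 0 := by rw [← add_assoc, ← h, add_zero]
  have h0 : (1 + 1 : Fin (m + 2)) = 0 := add_left_cancel h'
  have hv : ((1 + 1 : Fin (m + 2))).val = 2 := by
    rw [Fin.add_def, Fin.val_one]; exact Nat.mod_eq_of_lt (by omega)
  rw [h0] at hv
  simp at hv

lemma myphi_edge {m : ℕ} (h1 : 1 ≤ m) (u : Fin (m + 2)) :
    myphi m s(u, u + 1) = col (m + 2) u := by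
  have h2 := no_two_cycle h1 u
  simp [myphi, myf, h2]

lemma colorDeg_cycle {m : ℕ} (h1 : 1 ≤ m) (φ : Sym2 (Fin (m + 2)) → Fin 3)
    (c : Fin 3) (v : Fin (m + 2)) :
    colorDeg (SimpleGraph.cycleGraph (m + 2)) φ c v =
      (if φ s(v, v - 1) = c then 1 else 0) + (if φ s(v, v + 1) = c then 1 else 0) := by
  classical
  have hne : (v - 1) ≠ (v + 1) := by
    intro h
    have h' : v = (v + 1) + 1 := by
      have := congrArg (· + 1) h
      simpa [sub_add_cancel] using this
    exact no_two_cycle h1 v h'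
  rw [colorDeg, Nat.card_eq_fintype_card, Fintype.card_subtype]
  have hset : (Finset.univ.filter fun w => (SimpleGraph.cycleGraph (m + 2)).Adj v w ∧ φ s(v, w) = c)
      = ({v - 1, v + 1} : Finset _).filter (fun w => φ s(v, w) = c) := by
    ext w
    simp only [Finset.mem_filter, Finset.mem_univ, true_and, Finset.mem_insert,
      Finset.mem_singleton, SimpleGraph.cycleGraph_adj]
    constructor
    · rintro ⟨h | h, hc⟩
      · exact ⟨Or.inl (by rw [← h]; abel), hc⟩
      · exact ⟨Or.inr (by rw [← h]; abel), hc⟩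
    · rintro ⟨h | h, hc⟩
      · exact ⟨Or.inl (by rw [h]; abel), hc⟩
      · exact ⟨Or.inr (by rw [h]; abel), hc⟩
  rw [hset]
  rw [show ({v - 1, v + 1} : Finset (Fin (m + 2))) = insert (v - 1) {v + 1} from rfl]
  rw [Finset.filter_insert, Finset.filter_singleton]
  split_ifs <;> simp [Finset.card_insert_of_notMem, hne]

lemma key {m : ℕ} (hm : m % 2 = 0) (h4 : 2 ≤ m) (u : Fin (m + 2)) :
    colorDeg (SimpleGraph.cycleGraph (m + 2)) (myphi m) (col (m + 2) u) u ≠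
      colorDeg (SimpleGraph.cycleGraph (m + 2)) (myphi m) (col (m + 2) u) (u + 1) := by
  have h1 : 1 ≤ m := by omega
  rw [colorDeg_cycle h1, colorDeg_cycle h1]
  have e1 : myphi m s(u, u - 1) = col (m + 2) (u - 1) := by
    have hs : s(u, u - 1) = s(u - 1, (u - 1) + 1) := by
      rw [sub_add_cancel, Sym2.eq_swap]
    rw [hs, myphi_edge h1]
  have e2 : myphi m s(u, u + 1) = col (m + 2) u := myphi_edge h1 u
  have e4 : (u + 1) - 1 = u := add_sub_cancel_right u 1
  have e3 : myphi m s(u + 1, u) = col (m + 2) u := by rw [Sym2.eq_swap]; exact e2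
  have e5 : myphi m s(u + 1, (u + 1) + 1) = col (m + 2) (u + 1) := myphi_edge h1 (u + 1)
  rw [e2, e4, e3, e5, e1]
  have hA : (col (m + 2) (u - 1) = col (m + 2) u) ↔ ¬ u.val % 2 = 0 := by
    have h' := col_succ hm h4 (u - 1)
    rw [sub_add_cancel] at h'
    rw [eq_comm, h', pred_parity hm]
  have hB := col_succ hm h4 u
  by_cases h : u.val % 2 = 0 <;> simp [hA, hB, h]

/-- Every cycle of even length admits a locally irregular edge coloring with at
most 3 colors. -/
theorem even_cycle_three_colorable (n : ℕ) (hn : Even n) (h3 : 3 ≤ n) :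
    ∃ φ : Sym2 (Fin n) → Fin 3,
      IsLocIrrColoring (SimpleGraph.cycleGraph n) φ := by
  obtain ⟨m, rfl⟩ : ∃ m, n = m + 2 := ⟨n - 2, by omega⟩
  have hm : m % 2 = 0 := by rcases hn with ⟨t, ht⟩; omega
  have h4 : 2 ≤ m := by omega
  refine ⟨myphi m, ?_⟩
  intro v w hadj
  rw [SimpleGraph.cycleGraph_adj] at hadj
  rcases hadj with h | h
  · have hv : v = w + 1 := by rw [← h]; abel
    subst hv
    have hs : s(w + 1, w) = s(w, w + 1) := Sym2.eq_swap
    rw [hs, myphi_edge (by omega : 1 ≤ m) w]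
    exact (key hm h4 w).symm
  · have hw : w = v + 1 := by rw [← h]; abel
    subst hw
    rw [myphi_edge (by omega : 1 ≤ m) v]
    exact key hm h4 v
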